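/- Let W₇ := {A algebraic curvature tensor : A(Jx,y,z,w) = A(x,y,Jz,w) for all x,y,z,w} and let W_G be the set of algebraic curvature tensors satisfying the Gray identity. Then W_G ∩ W₇ = {0}. -/

import Mathlib

/-- An algebraic curvature tensor: a (multilinear) map with the usual symmetries. -/
def IsCurv {V : Type*} [AddCommGroup V] [Module ℝ V]
    (A : V →ₗ[ℝ] V →ₗ[ℝ] V →ₗ[ℝ] V →ₗ[ℝ] ℝ) : Prop :=
  (∀ x y z w, A x y z w = -A y x z w) ∧
  (∀ x y z w, A x y z w = A z w x y) ∧
  (∀ x y z w, A x y z w + A y z x w + A z x y w = 0)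

/-- The Gray identity. -/
def IsGray {V : Type*} [AddCommGroup V] [Module ℝ V] (J : V →ₗ[ℝ] V)
    (A : V →ₗ[ℝ] V →ₗ[ℝ] V →ₗ[ℝ] V →ₗ[ℝ] ℝ) : Prop :=
  ∀ x y z w, A x y z w + A (J x) (J y) (J z) (J w) =
    A (J x) (J y) z w + A x y (J z) (J w) + A (J x) y (J z) w +
    A x (J y) z (J w) + A (J x) y z (J w) + A x (J y) (J z) w

/-- `W_G ∩ W₇ = {0}`. -/
theorem stmt_17 {V : Type*} [AddCommGroup V] [Module ℝ V]
    (J : V →ₗ[ℝ] V) (hJ2 : ∀ x, J (J x) = -x) :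
    {A : V →ₗ[ℝ] V →ₗ[ℝ] V →ₗ[ℝ] V →ₗ[ℝ] ℝ | IsCurv A ∧ IsGray J A} ∩
      {A | IsCurv A ∧ ∀ x y z w, A (J x) y z w = A x y (J z) w} = {0} := by
  ext A
  simp only [Set.mem_inter_iff, Set.mem_setOf_eq, Set.mem_singleton_iff]
  constructor
  · rintro ⟨⟨⟨hA, hP, _⟩, hG⟩, ⟨_, hW⟩⟩
    -- move a J from slot 2 to slot 3
    have h2 : ∀ x y z w, A x (J y) z w = A x y (J z) w := by
      intro x y z w
      rw [hA x (J y) z w, hW y x z w, ← hA]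
    -- move a J from slot 4 to slot 3
    have h4 : ∀ x y z w, A x y z (J w) = A x y (J z) w := by
      intro x y z w
      rw [hP x y z (J w), h2 z w x y, ← hW, ← hP]
    -- two J's in slots 1 and 3 give -A
    have hneg : ∀ x y z w, A (J x) y (J z) w = -A x y z w := by
      intro x y z w
      have := hW (J x) y z w
      rw [hJ2 x] at this
      rw [← this]
      have h0 : A (-x) + A x = 0 := by rw [← map_add, neg_add_cancel, map_zero]
      have h1 := congrArg (fun f => f y z w) h0
      simp only [LinearMap.add_apply, LinearMap.zero_apply] at h1
      linarith
    ext x y z w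
    have hG' := hG x y z w
    have e1 : A (J x) (J y) z w = -A x y z w := by
      rw [h2 (J x) y z w, hneg]
    have e2 : A x y (J z) (J w) = -A x y z w := by
      rw [hP x y (J z) (J w), h2 (J z) w x y, hneg z w x y, hP x y z w]
    have e3 : A (J x) y (J z) w = -A x y z w := hneg x y z w
    have e4 : A x (J y) z (J w) = -A x y z w := by
      rw [h2 x y z (J w), h4 x y (J z) w, hJ2]
      simp
    have e5 : A (J x) y z (J w) = -A x y z w := by
      rw [h4 (J x) y z w, hneg]
    have e6 : A x (J y) (J z) w = -A x y z w := by
      rw [h2 x y (J z) w, hJ2]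
      simp
    have e0 : A (J x) (J y) (J z) (J w) = A x y z w := by
      rw [h2 (J x) y (J z) (J w), hJ2]
      simp [e5]
    rw [e0, e1, e2, e3, e4, e5, e6] at hG'
    simp only [LinearMap.zero_apply]
    linarith
  · rintro rfl
    refine ⟨⟨⟨?_, ?_⟩, ?_⟩, ⟨?_, ?_⟩⟩ <;> simp [IsCurv, IsGray]
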